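/- arXiv:math/0609215 — 3 statements merged into one kernel-verified Lean document; each statement's English description precedes it below -/
import Mathlib

section
/- Let n ≥ 1, let θ = (θ₁,…,θₙ) ∈ ℝⁿ, and let u = diag(e^{iθ₁},…,e^{iθₙ}) ∈ U(n). Let V be the complex vector space of n×n complex matrices whose diagonal entries are all zero. The linear map T : V → V, T(X) = X − uXu⁻¹, is well defined (conjugation by a diagonal matrix preserves the diagonal entries), and |det T| = ∏_{1 ≤ j < k ≤ n} |e^{iθ_j} − e^{iθ_k}|². -/
open Matrix

/-- The complex vector space of `n×n` complex matrices with all diagonal entries zero. -/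
noncomputable def zeroDiag (n : ℕ) : Submodule ℂ (Matrix (Fin n) (Fin n) ℂ) where
  carrier := {X | ∀ i, X i i = 0}
  add_mem' := by
    intro X Y hX hY i
    simp [Matrix.add_apply, hX i, hY i]
  zero_mem' := by
    intro i
    rfl
  smul_mem' := by
    intro c X hX i
    simp [Matrix.smul_apply, hX i]

lemma mem_zeroDiag {n : ℕ} {X : Matrix (Fin n) (Fin n) ℂ} :
    X ∈ zeroDiag n ↔ ∀ i, X i i = 0 := Iff.rfl

/-- Coordinates on `zeroDiag n` given by the off-diagonal entries. -/
noncomputable def zeroDiagEquiv (n : ℕ) :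
    zeroDiag n ≃ₗ[ℂ] ({p : Fin n × Fin n // p.1 ≠ p.2} → ℂ) where
  toFun X := fun p => (X : Matrix (Fin n) (Fin n) ℂ) p.1.1 p.1.2
  map_add' X Y := rfl
  map_smul' c X := rfl
  invFun f := ⟨Matrix.of fun j k => if h : j = k then 0 else f ⟨(j, k), h⟩,
    fun i => by simp⟩
  left_inv X := by
    apply Subtype.ext
    ext j k
    by_cases h : j = k
    · subst h
      simpa using (X.2 j).symm
    · simp [h]
  right_inv f := by
    funext p
    have hp : p.1.1 ≠ p.1.2 := p.2
    simp only [Matrix.of_apply, dif_neg hp]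

/-- **The Weyl-integration Jacobian for `U(n)` acting on itself by conjugation**: for
`u = diag(e^{iθ₁},…,e^{iθₙ})`, the map `T X = X - u X u⁻¹` preserves the space `V` of matrices
with zero diagonal, and any linear map realizing it on `V` has
`|det T| = ∏_{j<k} |e^{iθⱼ} - e^{iθₖ}|²`. -/
theorem jacobian_conjugation_unitary (n : ℕ) (θ : Fin n → ℝ)
    (u : Matrix (Fin n) (Fin n) ℂ)
    (hu : u = Matrix.diagonal fun j => Complex.exp (θ j * Complex.I)) :
    (∀ X ∈ zeroDiag n, X - u * X * u⁻¹ ∈ zeroDiag n) ∧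
    ∀ T : zeroDiag n →ₗ[ℂ] zeroDiag n,
      (∀ X : zeroDiag n, (T X : Matrix (Fin n) (Fin n) ℂ)
          = (X : Matrix (Fin n) (Fin n) ℂ) - u * X * u⁻¹) →
      ‖LinearMap.det T‖ =
        ∏ p ∈ Finset.univ.filter (fun p : Fin n × Fin n => p.1 < p.2),
          ‖Complex.exp (θ p.1 * Complex.I) - Complex.exp (θ p.2 * Complex.I)‖ ^ 2 := by
  set d : Fin n → ℂ := fun j => Complex.exp (θ j * Complex.I) with hd
  have hd0 : ∀ j, d j ≠ 0 := fun j => Complex.exp_ne_zero _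
  have habs : ∀ j, ‖d j‖ = 1 := by
    intro j
    simp [hd, Complex.norm_exp]
  have hinv : u⁻¹ = Matrix.diagonal (fun j => (d j)⁻¹) := by
    apply Matrix.inv_eq_right_inv
    rw [hu, Matrix.diagonal_mul_diagonal]
    have : (fun j => d j * (d j)⁻¹) = fun _ => (1 : ℂ) :=
      funext fun j => mul_inv_cancel₀ (hd0 j)
    rw [this, Matrix.diagonal_one]
  have hconj : ∀ X : Matrix (Fin n) (Fin n) ℂ, ∀ j k,
      (u * X * u⁻¹) j k = d j * X j k * (d k)⁻¹ := by
    intro X j k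
    rw [hinv, hu, Matrix.mul_diagonal, Matrix.diagonal_mul]
  constructor
  · intro X hX i
    have h0 : X i i = 0 := hX i
    simp [Matrix.sub_apply, hconj, h0]
  · intro T hT
    classical
    let b : Module.Basis {p : Fin n × Fin n // p.1 ≠ p.2} ℂ (zeroDiag n) :=
      Module.Basis.ofEquivFun (zeroDiagEquiv n)
    have hbval : ∀ (q : {p : Fin n × Fin n // p.1 ≠ p.2}) (j k : Fin n) (h : j ≠ k),
        ((b q : zeroDiag n) : Matrix (Fin n) (Fin n) ℂ) j k
          = if (⟨(j, k), h⟩ : {p : Fin n × Fin n // p.1 ≠ p.2}) = q then 1 else 0 := by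
      intro q j k h
      have h1 : ((b q : zeroDiag n) : Matrix (Fin n) (Fin n) ℂ) j k
          = (zeroDiagEquiv n) (b q) ⟨(j, k), h⟩ := rfl
      rw [h1, ← Module.Basis.ofEquivFun_repr_apply, Module.Basis.repr_self, Finsupp.single_apply]
      simp [eq_comm]
    have hmat : LinearMap.toMatrix b b T =
        Matrix.diagonal (fun q : {p : Fin n × Fin n // p.1 ≠ p.2} =>
          1 - d q.1.1 * (d q.1.2)⁻¹) := by
      ext p q
      rw [LinearMap.toMatrix_apply]
      have hrepr : b.repr (T (b q)) p
          = ((T (b q) : zeroDiag n) : Matrix (Fin n) (Fin n) ℂ) p.1.1 p.1.2 := by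
        rw [Module.Basis.ofEquivFun_repr_apply]
        rfl
      rw [hrepr, hT, Matrix.sub_apply, hconj, hbval q p.1.1 p.1.2 p.2]
      have hpp : (⟨(p.1.1, p.1.2), p.2⟩ : {p : Fin n × Fin n // p.1 ≠ p.2}) = p := by
        apply Subtype.ext
        exact Prod.ext rfl rfl
      rw [hpp]
      by_cases hpq : p = q
      · subst hpq
        simp [Matrix.diagonal_apply_eq]
      · simp [hpq, Matrix.diagonal_apply_ne _ hpq]
    have hdet : LinearMap.det T
        = ∏ q : {p : Fin n × Fin n // p.1 ≠ p.2}, (1 - d q.1.1 * (d q.1.2)⁻¹) := by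
      rw [← LinearMap.det_toMatrix b, hmat, Matrix.det_diagonal]
    have key : ∀ j k : Fin n, ‖1 - d j * (d k)⁻¹‖ = ‖d j - d k‖ := by
      intro j k
      have hmul : (1 - d j * (d k)⁻¹) * d k = d k - d j := by
        field_simp [hd0 k]
      calc ‖1 - d j * (d k)⁻¹‖
          = ‖1 - d j * (d k)⁻¹‖ * ‖d k‖ := by rw [habs k, mul_one]
        _ = ‖(1 - d j * (d k)⁻¹) * d k‖ := (norm_mul _ _).symm
        _ = ‖d k - d j‖ := by rw [hmul]
        _ = ‖d j - d k‖ := norm_sub_rev _ _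
    rw [hdet, norm_prod]
    have hst := Finset.prod_subtype (p := fun p : Fin n × Fin n => p.1 ≠ p.2) (F := inferInstance)
      (Finset.univ.filter (fun p : Fin n × Fin n => p.1 ≠ p.2))
      (fun p : Fin n × Fin n => by simp)
      (fun p : Fin n × Fin n => ‖d p.1 - d p.2‖)
    have hsub : (∏ q : {p : Fin n × Fin n // p.1 ≠ p.2},
          ‖1 - d q.1.1 * (d q.1.2)⁻¹‖)
        = ∏ p ∈ Finset.univ.filter (fun p : Fin n × Fin n => p.1 ≠ p.2),
            ‖d p.1 - d p.2‖ := by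
      rw [hst]
      exact Finset.prod_congr rfl (fun q _ => key q.1.1 q.1.2)
    rw [hsub]
    have hunion : Finset.univ.filter (fun p : Fin n × Fin n => p.1 ≠ p.2)
        = (Finset.univ.filter (fun p : Fin n × Fin n => p.1 < p.2))
          ∪ (Finset.univ.filter (fun p : Fin n × Fin n => p.2 < p.1)) := by
      ext p
      simp only [Finset.mem_filter, Finset.mem_union, Finset.mem_univ, true_and]
      constructor
      · intro h
        exact lt_or_gt_of_ne h
      · rintro (h | h)
        · exact ne_of_lt h
        · exact ne_of_gt h
    have hdisj : Disjoint (Finset.univ.filter (fun p : Fin n × Fin n => p.1 < p.2))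
        (Finset.univ.filter (fun p : Fin n × Fin n => p.2 < p.1)) := by
      rw [Finset.disjoint_left]
      intro p hp hp'
      simp only [Finset.mem_filter, Finset.mem_univ, true_and] at hp hp'
      exact absurd hp' (not_lt.2 hp.le)
    rw [hunion, Finset.prod_union hdisj]
    have hswap : (∏ p ∈ Finset.univ.filter (fun p : Fin n × Fin n => p.2 < p.1),
          ‖d p.1 - d p.2‖)
        = ∏ p ∈ Finset.univ.filter (fun p : Fin n × Fin n => p.1 < p.2),
            ‖d p.1 - d p.2‖ := by
      apply Finset.prod_nbij' (fun p => Prod.swap p) (fun p => Prod.swap p)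
      · intro p hp; simp only [Finset.mem_filter, Finset.mem_univ, true_and] at hp ⊢; exact hp
      · intro p hp; simp only [Finset.mem_filter, Finset.mem_univ, true_and] at hp ⊢; exact hp
      · intro p _; exact Prod.swap_swap p
      · intro p _; exact Prod.swap_swap p
      · intro p _
        simp only [Prod.fst_swap, Prod.snd_swap]
        exact (norm_sub_rev _ _)
    rw [hswap, ← Finset.prod_mul_distrib]
    exact Finset.prod_congr rfl (fun p _ => (sq ‖d p.1 - d p.2‖).symm)
end

section
/- Let U ⊆ ℝⁿ be an open set, let φ : U → ℝⁿ be continuously differentiable with det Dφ(x) ≠ 0 for every x ∈ U, and let k ≥ 1 be such that every point of V := φ(U) has exactly k preimages under φ in U. Then for every Lebesgue-integrable function f : ℝⁿ → ℝ one has ∫_V f(y) dy = (1/k) ∫_U f(φ(x)) · |det Dφ(x)| dx. -/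
open MeasureTheory Set

/-- **Multiplicity-`k` change of variables**: if `φ` is `C¹` on an open set `U ⊆ ℝⁿ` with
everywhere invertible derivative, and every point of `V = φ(U)` has exactly `k ≥ 1` preimages
in `U`, then for every Lebesgue-integrable `f`,
`∫_V f(y) dy = (1/k) ∫_U f(φ x) |det Dφ(x)| dx`. -/
theorem integral_image_of_k_fold (n : ℕ) (U : Set (Fin n → ℝ)) (hU : IsOpen U)
    (φ : (Fin n → ℝ) → (Fin n → ℝ)) (hφ : ContDiffOn ℝ 1 φ U)
    (hdet : ∀ x ∈ U, LinearMap.det ((fderiv ℝ φ x) : (Fin n → ℝ) →ₗ[ℝ] (Fin n → ℝ)) ≠ 0)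
    (k : ℕ) (hk : 1 ≤ k)
    (hfib : ∀ y ∈ φ '' U, Nat.card {x : Fin n → ℝ // x ∈ U ∧ φ x = y} = k)
    (f : (Fin n → ℝ) → ℝ) (hf : Integrable f) :
    ∫ y in φ '' U, f y =
      (1 / (k : ℝ)) * ∫ x in U,
        f (φ x) * |LinearMap.det ((fderiv ℝ φ x) : (Fin n → ℝ) →ₗ[ℝ] (Fin n → ℝ))| := by
  classical
  -- trivial case
  rcases U.eq_empty_or_nonempty with rfl | hUne
  · simp
  set D : (Fin n → ℝ) → ℝ := fun x => LinearMap.det ((fderiv ℝ φ x) : (Fin n → ℝ) →ₗ[ℝ] (Fin n → ℝ)) with hD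
  -- Step 1: local injectivity neighborhoods
  have key : ∀ x : Fin n → ℝ, ∃ W : Set (Fin n → ℝ), x ∈ U → IsOpen W ∧ x ∈ W ∧ Set.InjOn φ W := by
    intro x
    by_cases hx : x ∈ U
    · have hca : ContDiffAt ℝ 1 φ x := hφ.contDiffAt (hU.mem_nhds hx)
      have hsd : HasStrictFDerivAt φ (fderiv ℝ φ x) x := hca.hasStrictFDerivAt one_ne_zero
      set e : (Fin n → ℝ) ≃ₗ[ℝ] (Fin n → ℝ) := LinearMap.equivOfDetNeZero _ (hdet x hx)
      have hcoe : (e.toContinuousLinearEquiv : (Fin n → ℝ) →L[ℝ] (Fin n → ℝ)) = fderiv ℝ φ x := by ext v; rfl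
      have hsd' : HasStrictFDerivAt φ (e.toContinuousLinearEquiv : (Fin n → ℝ) →L[ℝ] (Fin n → ℝ)) x := hcoe ▸ hsd
      refine ⟨(hsd'.toOpenPartialHomeomorph φ).source, fun _ =>
        ⟨(hsd'.toOpenPartialHomeomorph φ).open_source, hsd'.mem_toOpenPartialHomeomorph_source, ?_⟩⟩
      have := (hsd'.toOpenPartialHomeomorph φ).injOn
      rwa [hsd'.toOpenPartialHomeomorph_coe] at this
    · exact ⟨∅, fun h => absurd h hx⟩
  choose W hW using key
  -- Step 2: countable cover
  obtain ⟨t, htU, htc, htcov⟩ :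
      ∃ t ⊆ U, t.Countable ∧ U ⊆ ⋃ x ∈ t, (W x ∩ U) := by
    apply TopologicalSpace.countable_cover_nhdsWithin
    intro x hx
    exact Filter.inter_mem
      (mem_nhdsWithin_of_mem_nhds ((hW x hx).1.mem_nhds (hW x hx).2.1)) self_mem_nhdsWithin
  have htne : t.Nonempty := by
    rcases hUne with ⟨x, hx⟩
    rcases mem_iUnion₂.1 (htcov hx) with ⟨c, hc, -⟩
    exact ⟨c, hc⟩
  obtain ⟨c, rfl⟩ := htc.exists_eq_range htne
  have hcU : ∀ i, c i ∈ U := fun i => htU ⟨i, rfl⟩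
  set B : ℕ → Set (Fin n → ℝ) := fun i => W (c i) ∩ U with hB
  have hBU : ∀ i, B i ⊆ U := fun i => inter_subset_right
  have hcov : U = ⋃ i, B i := by
    apply Subset.antisymm
    · intro x hx
      rcases mem_iUnion₂.1 (htcov hx) with ⟨y, ⟨i, rfl⟩, hxy⟩
      exact mem_iUnion.2 ⟨i, hxy⟩
    · exact iUnion_subset hBU
  set A : ℕ → Set (Fin n → ℝ) := disjointed B with hA
  have hAB : ∀ i, A i ⊆ B i := disjointed_subset B
  have hAU : ∀ i, A i ⊆ U := fun i => (hAB i).trans (hBU i)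
  have hAm : ∀ i, MeasurableSet (A i) := by
    refine MeasurableSet.disjointed (fun i => ?_)
    exact (((hW (c i) (hcU i)).1).inter hU).measurableSet
  have hAdis : Pairwise (Function.onFun Disjoint A) := disjoint_disjointed B
  have hAcov : ⋃ i, A i = U := by rw [hA, iUnion_disjointed, ← hcov]
  have hAinj : ∀ i, Set.InjOn φ (A i) :=
    fun i => ((hW (c i) (hcU i)).2.2).mono ((hAB i).trans inter_subset_left)
  have hAd : ∀ i, ∀ x ∈ A i, HasFDerivWithinAt φ (fderiv ℝ φ x) (A i) x := by
    intro i x hx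
    have : DifferentiableAt ℝ φ x :=
      (hφ.differentiableOn one_ne_zero).differentiableAt (hU.mem_nhds (hAU i hx))
    exact this.hasFDerivAt.hasFDerivWithinAt
  have hAcont : ∀ i, ContinuousOn φ (A i) := fun i => hφ.continuousOn.mono (hAU i)
  have hAim : ∀ i, MeasurableSet (φ '' A i) :=
    fun i => (hAm i).image_of_continuousOn_injOn (hAcont i) (hAinj i)
  have hUim : MeasurableSet (φ '' U) := by
    rw [← hAcov, image_iUnion]
    exact MeasurableSet.iUnion hAim
  -- Step 3: counting
  have hScard : ∀ y ∈ φ '' U, ∃ hfin : {i : ℕ | y ∈ φ '' A i}.Finite,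
      hfin.toFinset.card = k := by
    intro y hy
    set F := {x : Fin n → ℝ // x ∈ U ∧ φ x = y}
    have hFfin : Finite F := Nat.finite_of_card_ne_zero (by rw [hfib y hy]; omega)
    have hex : ∀ x : F, ∃ i, (x : Fin n → ℝ) ∈ A i := by
      intro x
      have : (x : Fin n → ℝ) ∈ ⋃ i, A i := hAcov.symm ▸ x.2.1
      exact mem_iUnion.1 this
    choose idx hidx using hex
    have hbij : Function.Bijective (fun x : F => (⟨idx x, ⟨x, hidx x, x.2.2⟩⟩ :
        {i : ℕ | y ∈ φ '' A i})) := by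
      constructor
      · intro x x' h
        have hi : idx x = idx x' := congrArg Subtype.val h
        have := hAinj (idx x) (hidx x) (hi ▸ hidx x') (x.2.2.trans x'.2.2.symm)
        exact Subtype.ext this
      · rintro ⟨i, hi⟩
        rcases hi with ⟨x, hxA, hxy⟩
        refine ⟨⟨x, hAU i hxA, hxy⟩, ?_⟩
        have hidx' : x ∈ A (idx ⟨x, hAU i hxA, hxy⟩) := hidx _
        have : idx (⟨x, hAU i hxA, hxy⟩ : F) = i := by
          by_contra hne
          exact (hAdis hne).le_bot ⟨hidx', hxA⟩ |>.elim
        exact Subtype.ext this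
    have hcard : Nat.card {i : ℕ | y ∈ φ '' A i} = k := by
      rw [← Nat.card_eq_of_bijective _ hbij, hfib y hy]
    have hfin : {i : ℕ | y ∈ φ '' A i}.Finite := by
      have : Finite {i : ℕ | y ∈ φ '' A i} := Finite.of_surjective _ hbij.2
      exact Set.finite_coe_iff.1 this
    refine ⟨hfin, ?_⟩
    rw [← hcard, Nat.card_eq_card_finite_toFinset hfin]
  -- tsum identities
  have htsumE : ∀ (g : (Fin n → ℝ) → ENNReal) (y : Fin n → ℝ),
      ∑' i, (φ '' A i).indicator g y = (k : ENNReal) * (φ '' U).indicator g y := by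
    intro g y
    by_cases hy : y ∈ φ '' U
    · obtain ⟨hfin, hcard⟩ := hScard y hy
      rw [tsum_eq_sum (s := hfin.toFinset)
          (fun i hi => indicator_of_notMem (by simpa using hi) g)]
      rw [Finset.sum_congr rfl (fun i hi => indicator_of_mem (by simpa using hi) g),
        Finset.sum_const, hcard, indicator_of_mem hy, nsmul_eq_mul]
    · have h0 : ∀ i, (φ '' A i).indicator g y = 0 := by
        intro i
        apply indicator_of_notMem
        exact fun h => hy (image_mono (f := φ) (hAU i) h)
      simp [h0, indicator_of_notMem hy]
  have htsumR : ∀ (y : Fin n → ℝ),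
      ∑' i, (φ '' A i).indicator f y = (k : ℝ) * (φ '' U).indicator f y := by
    intro y
    by_cases hy : y ∈ φ '' U
    · obtain ⟨hfin, hcard⟩ := hScard y hy
      rw [tsum_eq_sum (s := hfin.toFinset)
          (fun i hi => indicator_of_notMem (by simpa using hi) f)]
      rw [Finset.sum_congr rfl (fun i hi => indicator_of_mem (by simpa using hi) f),
        Finset.sum_const, hcard, indicator_of_mem hy, nsmul_eq_mul]
    · have h0 : ∀ i, (φ '' A i).indicator f y = 0 := by
        intro i
        apply indicator_of_notMem
        exact fun h => hy (image_mono (f := φ) (hAU i) h)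
      simp [h0, indicator_of_notMem hy]
  -- Step 4: master lintegral identity
  have Hlin : ∀ (g : (Fin n → ℝ) → ENNReal), AEMeasurable g volume →
      ∫⁻ x in U, ENNReal.ofReal |D x| * g (φ x) = (k : ENNReal) * ∫⁻ y in φ '' U, g y := by
    intro g hg
    calc ∫⁻ x in U, ENNReal.ofReal |D x| * g (φ x)
        = ∑' i, ∫⁻ x in A i, ENNReal.ofReal |D x| * g (φ x) := by
          rw [← hAcov, lintegral_iUnion hAm hAdis]
      _ = ∑' i, ∫⁻ y in φ '' A i, g y := by
          refine tsum_congr (fun i => ?_)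
          rw [lintegral_image_eq_lintegral_abs_det_fderiv_mul volume (hAm i) (hAd i) (hAinj i) g]
      _ = ∑' i, ∫⁻ y, (φ '' A i).indicator g y := by
          refine tsum_congr (fun i => ?_)
          rw [← lintegral_indicator (hAim i)]
      _ = ∫⁻ y, ∑' i, (φ '' A i).indicator g y :=
          (lintegral_tsum (fun i => hg.indicator (hAim i))).symm
      _ = ∫⁻ y, (k : ENNReal) * (φ '' U).indicator g y := by
          refine lintegral_congr (fun y => ?_)
          exact htsumE g y
      _ = (k : ENNReal) * ∫⁻ y in φ '' U, g y := by
          rw [lintegral_const_mul' _ _ (by simp), lintegral_indicator hUim]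
  -- Step 5: integrability of the pullback
  set h : (Fin n → ℝ) → ℝ := fun x => f (φ x) * |D x| with hh
  have hnn : ∀ x, (‖h x‖₊ : ENNReal) = ENNReal.ofReal |D x| * (‖f (φ x)‖₊ : ENNReal) := by
    intro x
    rw [hh]
    simp only [nnnorm_mul, ENNReal.coe_mul]
    rw [mul_comm]
    congr 1
    rw [← Real.enorm_eq_ofReal_abs]
    simp [Real.nnnorm_abs, enorm_eq_nnnorm]
  have hfin_lint : ∫⁻ x in U, (‖h x‖₊ : ENNReal) < ⊤ := by
    have := Hlin (fun y => (‖f y‖₊ : ENNReal)) hf.aestronglyMeasurable.enorm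
    calc ∫⁻ x in U, (‖h x‖₊ : ENNReal)
        = ∫⁻ x in U, ENNReal.ofReal |D x| * (‖f (φ x)‖₊ : ENNReal) := by
          exact lintegral_congr (fun x => hnn x)
      _ = (k : ENNReal) * ∫⁻ y in φ '' U, (‖f y‖₊ : ENNReal) := this
      _ < ⊤ := by
          apply ENNReal.mul_lt_top (by simp)
          exact (hf.integrableOn (s := φ '' U)).2.lt_top
  have hIntA : ∀ i, IntegrableOn h (A i) := by
    intro i
    have := (integrableOn_image_iff_integrableOn_abs_det_fderiv_smul volume
      (hAm i) (hAd i) (hAinj i) f).1 (hf.integrableOn)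
    refine this.congr_fun (fun x hx => ?_) (hAm i)
    simp [hh, hD, smul_eq_mul, mul_comm]
  have hIntU : IntegrableOn h U := by
    constructor
    · rw [← hAcov]
      exact aestronglyMeasurable_iUnion_iff.2 (fun i => (hIntA i).1)
    · exact hfin_lint
  -- Step 6: Bochner computation
  have hsum_norm : ∑' i, ∫⁻ y, ‖(φ '' A i).indicator f y‖₊ ≠ ⊤ := by
    have heq : ∀ i, ∫⁻ y, (‖(φ '' A i).indicator f y‖₊ : ENNReal)
        = ∫⁻ y in φ '' A i, (‖f y‖₊ : ENNReal) := by
      intro i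
      rw [← lintegral_indicator (hAim i)]
      congr 1
      ext y
      rw [nnnorm_indicator_eq_indicator_nnnorm]
      by_cases hy : y ∈ φ '' A i <;> simp [hy]
    rw [tsum_congr heq]
    have : ∑' i, ∫⁻ y in φ '' A i, (‖f y‖₊ : ENNReal)
        = (k : ENNReal) * ∫⁻ y in φ '' U, (‖f y‖₊ : ENNReal) := by
      calc ∑' i, ∫⁻ y in φ '' A i, (‖f y‖₊ : ENNReal)
          = ∑' i, ∫⁻ y, (φ '' A i).indicator (fun y => (‖f y‖₊ : ENNReal)) y := by
            refine tsum_congr (fun i => ?_)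
            rw [← lintegral_indicator (hAim i)]
        _ = ∫⁻ y, ∑' i, (φ '' A i).indicator (fun y => (‖f y‖₊ : ENNReal)) y :=
            (lintegral_tsum (fun i =>
              hf.aestronglyMeasurable.enorm.indicator (hAim i))).symm
        _ = ∫⁻ y, (k : ENNReal) * (φ '' U).indicator (fun y => (‖f y‖₊ : ENNReal)) y :=
            lintegral_congr (fun y => htsumE _ y)
        _ = (k : ENNReal) * ∫⁻ y in φ '' U, (‖f y‖₊ : ENNReal) := by
            rw [lintegral_const_mul' _ _ (by simp), lintegral_indicator hUim]
    rw [this]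
    exact ENNReal.mul_ne_top (by simp) (hf.integrableOn (s := φ '' U)).2.ne
  have Hmain : ∫ x in U, h x = (k : ℝ) * ∫ y in φ '' U, f y := by
    calc ∫ x in U, h x
        = ∑' i, ∫ x in A i, h x := by
          rw [← hAcov]
          exact integral_iUnion hAm hAdis (hAcov.symm ▸ hIntU)
      _ = ∑' i, ∫ y in φ '' A i, f y := by
          refine tsum_congr (fun i => ?_)
          rw [integral_image_eq_integral_abs_det_fderiv_smul volume (hAm i) (hAd i) (hAinj i) f]
          refine setIntegral_congr_fun (hAm i) (fun x hx => ?_)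
          simp [hh, hD, smul_eq_mul, mul_comm]
      _ = ∑' i, ∫ y, (φ '' A i).indicator f y := by
          refine tsum_congr (fun i => ?_)
          rw [integral_indicator (hAim i)]
      _ = ∫ y, ∑' i, (φ '' A i).indicator f y :=
          (integral_tsum (fun i => hf.aestronglyMeasurable.indicator (hAim i)) hsum_norm).symm
      _ = ∫ y, (k : ℝ) * (φ '' U).indicator f y := by
          exact integral_congr_ae (Filter.Eventually.of_forall htsumR)
      _ = (k : ℝ) * ∫ y in φ '' U, f y := by
          rw [integral_const_mul, integral_indicator hUim]
  have hk0 : (k : ℝ) ≠ 0 := Nat.cast_ne_zero.2 (by omega)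
  rw [show (∫ x in U, f (φ x) * |LinearMap.det ((fderiv ℝ φ x) : (Fin n → ℝ) →ₗ[ℝ] (Fin n → ℝ))|) = ∫ x in U, h x
    from rfl, Hmain]
  field_simp
end

section
/- Let n ≥ 1, let T ≤ U(n) be the subgroup of diagonal unitary matrices, and let U(n)/T denote the set of left cosets of T. For every u ∈ U(n) whose n eigenvalues are pairwise distinct, the set { (gT, t) ∈ (U(n)/T) × T : g t g⁻¹ = u } has exactly n! elements (note that g t g⁻¹ is independent of the representative g of the coset gT). -/
open Matrix

section AuxWeyl
open Polynomial
variable {n : ℕ}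

private lemma aux_charpoly_conj (A G Gi : Matrix (Fin n) (Fin n) ℂ)
    (h1 : G * Gi = 1) (h2 : Gi * G = 1) :
    (G * A * Gi).charpoly = A.charpoly := by
  set f : Matrix (Fin n) (Fin n) ℂ →+* Matrix (Fin n) (Fin n) ℂ[X] := (C : ℂ →+* ℂ[X]).mapMatrix with hf
  have hGGi : f G * f Gi = 1 := by rw [← _root_.map_mul, h1, _root_.map_one]
  have hcm : (G * A * Gi).charmatrix = f G * A.charmatrix * f Gi := by
    rw [Matrix.charmatrix, Matrix.charmatrix, show C.mapMatrix (G * A * Gi) = f G * f A * f Gi by rw [← hf, _root_.map_mul, _root_.map_mul], show C.mapMatrix A = f A from rfl]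
    rw [Matrix.mul_sub, Matrix.sub_mul]
    congr 1
    rw [← Matrix.scalar_commute X (fun r => Commute.all _ _) (f G), Matrix.mul_assoc,
      hGGi, Matrix.mul_one]
  rw [Matrix.charpoly, Matrix.charpoly, hcm, Matrix.det_mul, Matrix.det_mul]
  have hdet : (f G).det * (f Gi).det = 1 := by
    rw [← Matrix.det_mul, hGGi, Matrix.det_one]
  calc (f G).det * A.charmatrix.det * (f Gi).det
      = A.charmatrix.det * ((f G).det * (f Gi).det) := by ring
    _ = A.charmatrix.det := by rw [hdet, mul_one]

private lemma aux_roots_diag (f : Fin n → ℂ) :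
    (Matrix.diagonal f).charpoly.roots = Finset.univ.val.map f := by
  have h : (Matrix.diagonal f).BlockTriangular id := fun i j hij =>
    Matrix.diagonal_apply_ne' f (ne_of_lt hij)
  rw [Matrix.charpoly_of_upperTriangular _ h]
  have : ∏ i : Fin n, (X - C (Matrix.diagonal f i i))
      = (Multiset.map (fun a => X - C a) (Finset.univ.val.map f)).prod := by
    rw [Multiset.map_map, Finset.prod]
    simp [Matrix.diagonal_apply_eq]
  rw [this, Polynomial.roots_multiset_prod_X_sub_C]

private lemma aux_exists_eig (A : Matrix (Fin n) (Fin n) ℂ) {μ : ℂ}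
    (h : μ ∈ A.charpoly.roots) : ∃ v, v ≠ 0 ∧ A *ᵥ v = μ • v := by
  have hroot : A.charpoly.IsRoot μ := Polynomial.isRoot_of_mem_roots h
  have hdet : (μ • (1 : Matrix (Fin n) (Fin n) ℂ) - A).det = 0 := by
    have heq : (A.charmatrix.map (Polynomial.evalRingHom μ)) = μ • 1 - A := by
      ext i j
      rcases eq_or_ne i j with rfl | hij
      · simp [Matrix.charmatrix_apply, Matrix.map_apply, Matrix.diagonal_apply_eq,
          Matrix.smul_apply, Matrix.one_apply_eq]
      · simp [Matrix.charmatrix_apply, Matrix.map_apply, Matrix.diagonal_apply_ne _ hij,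
          Matrix.smul_apply, Matrix.one_apply_ne hij, hij]
    have := RingHom.map_det (Polynomial.evalRingHom μ) A.charmatrix
    rw [show (Polynomial.evalRingHom μ).mapMatrix A.charmatrix
        = A.charmatrix.map (Polynomial.evalRingHom μ) from rfl, heq] at this
    have h0 : (Polynomial.evalRingHom μ) A.charmatrix.det = 0 := by
      simpa [Matrix.charpoly] using hroot
    rw [h0] at this
    exact this.symm
  obtain ⟨v, hv0, hv⟩ := Matrix.exists_mulVec_eq_zero_iff.mpr hdet
  refine ⟨v, hv0, ?_⟩
  rw [Matrix.sub_mulVec, Matrix.smul_mulVec, Matrix.one_mulVec, sub_eq_zero] at hv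
  exact hv.symm

private def Pm {n : ℕ} (σ : Equiv.Perm (Fin n)) : Matrix (Fin n) (Fin n) ℂ :=
  σ.toPEquiv.toMatrix

private lemma Pm_one : Pm (1 : Equiv.Perm (Fin n)) = 1 := by
  rw [Pm, show (1 : Equiv.Perm (Fin n)) = Equiv.refl (Fin n) from rfl,
    Equiv.toPEquiv_refl, PEquiv.toMatrix_refl]

private lemma Pm_mul (σ τ : Equiv.Perm (Fin n)) : Pm (σ * τ) = Pm τ * Pm σ := by
  rw [Pm, Pm, Pm, show σ * τ = τ.trans σ from rfl, Equiv.toPEquiv_trans,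
    PEquiv.toMatrix_trans]

private lemma Pm_star (σ : Equiv.Perm (Fin n)) : star (Pm σ) = Pm σ⁻¹ := by
  have h : Pm σ⁻¹ = (Pm σ)ᵀ := by
    rw [Pm, Pm, show (σ⁻¹ : Equiv.Perm (Fin n)) = σ.symm from rfl, Equiv.toPEquiv_symm,
      PEquiv.toMatrix_symm]
  rw [h]
  ext i j
  simp only [Matrix.star_apply, Matrix.conjTranspose_apply, Matrix.transpose_apply,
    PEquiv.toMatrix_apply, Pm]
  rcases em (i ∈ σ.toPEquiv j) with h' | h' <;> simp [h']

private lemma Pm_mem (σ : Equiv.Perm (Fin n)) : Pm σ ∈ Matrix.unitaryGroup (Fin n) ℂ := by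
  rw [Matrix.mem_unitaryGroup_iff, Pm_star, ← Pm_mul, inv_mul_cancel, Pm_one]

private lemma Pm_conj_diag (σ : Equiv.Perm (Fin n)) (f : Fin n → ℂ) :
    Pm σ * Matrix.diagonal f * Pm σ⁻¹ = Matrix.diagonal (f ∘ σ) := by
  rw [Pm, Pm, show (σ⁻¹ : Equiv.Perm (Fin n)) = σ.symm from rfl,
    PEquiv.toMatrix_toPEquiv_mul, PEquiv.mul_toMatrix_toPEquiv]
  ext i j
  simp only [Matrix.submatrix_apply, Equiv.symm_symm, id_eq, Matrix.diagonal_apply,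
    Function.comp_apply]
  rcases eq_or_ne i j with rfl | hij
  · simp
  · rw [if_neg hij, if_neg (fun h => hij (σ.injective h))]

private lemma Pm_eq_one_of_isDiag {σ : Equiv.Perm (Fin n)} (h : (Pm σ).IsDiag) :
    σ = 1 := by
  ext i
  suffices hfix : σ i = i by simp [hfix]
  by_contra hne
  have h1 : Pm σ i (σ i) = 1 := by
    simp [Pm, PEquiv.toMatrix_apply, Equiv.toPEquiv_apply]
  have h0 : Pm σ i (σ i) = 0 := h (fun he => hne he.symm)
  rw [h0] at h1
  exact zero_ne_one h1

private lemma aux_diagonalize {n : ℕ} (u : Matrix.unitaryGroup (Fin n) ℂ)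
    (hu : ((u : Matrix (Fin n) (Fin n) ℂ).charpoly.roots).Nodup) :
    ∃ (g : Matrix.unitaryGroup (Fin n) ℂ) (d : Fin n → ℂ),
      Function.Injective d ∧
      (u : Matrix (Fin n) (Fin n) ℂ).charpoly.roots = Finset.univ.val.map d ∧
      (u : Matrix (Fin n) (Fin n) ℂ) * (g : Matrix (Fin n) (Fin n) ℂ)
        = (g : Matrix (Fin n) (Fin n) ℂ) * Matrix.diagonal d := by
  set U : Matrix (Fin n) (Fin n) ℂ := (u : Matrix (Fin n) (Fin n) ℂ) with hU
  -- the roots, enumerated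
  have hcard : Multiset.card U.charpoly.roots = n := by
    have hs : U.charpoly.Splits := IsAlgClosed.splits _
    have h2 := hs.natDegree_eq_card_roots.symm
    rw [h2, Matrix.charpoly_natDegree_eq_dim, Fintype.card_fin]
  set s : Finset ℂ := ⟨U.charpoly.roots, hu⟩ with hsdef
  have hsc : s.card = n := hcard
  set d : Fin n → ℂ := fun i => (s.equivFin.symm (Fin.cast hsc.symm i) : ℂ) with hd
  have hd_inj : Function.Injective d := by
    intro a b hab
    have := s.equivFin.symm.injective (Subtype.val_injective hab)
    simpa [Fin.ext_iff] using this
  have hd_mem : ∀ i, d i ∈ U.charpoly.roots := fun i =>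
    Finset.mem_def.mp (s.equivFin.symm (Fin.cast hsc.symm i)).2
  have hroots : U.charpoly.roots = Finset.univ.val.map d := by
    have hnd : (Finset.univ.val.map d).Nodup := Finset.univ.nodup.map hd_inj
    have hle : Finset.univ.val.map d ≤ U.charpoly.roots := by
      refine (Multiset.le_iff_subset hnd).mpr ?_
      intro a ha
      obtain ⟨i, _, rfl⟩ := Multiset.mem_map.mp ha
      exact hd_mem i
    refine (Multiset.eq_of_le_of_card_le hle ?_).symm
    rw [hcard, Multiset.card_map]
    simp
  -- eigenvectors
  choose w hw0 hw using fun i => aux_exists_eig U (hd_mem i)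
  -- inner-product preservation
  have hpres : ∀ v v' : Fin n → ℂ, star (U *ᵥ v) ⬝ᵥ (U *ᵥ v') = star v ⬝ᵥ v' := by
    intro v v'
    rw [Matrix.star_mulVec, Matrix.dotProduct_mulVec, Matrix.vecMul_vecMul,
      ← Matrix.star_eq_conjTranspose, Matrix.UnitaryGroup.star_mul_self, Matrix.vecMul_one]
  have hlam : ∀ i j, (starRingEnd ℂ) (d i) * d j * (star (w i) ⬝ᵥ w j)
      = star (w i) ⬝ᵥ w j := by
    intro i j
    have h := hpres (w i) (w j)
    rw [hw i, hw j, star_smul, smul_dotProduct, dotProduct_smul] at h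
    simpa [smul_eq_mul, mul_assoc, mul_left_comm, mul_comm] using h
  set r : Fin n → ℝ := fun i => ∑ k, Complex.normSq (w i k) with hrdef
  have hreal : ∀ i, star (w i) ⬝ᵥ w i = ((r i : ℝ) : ℂ) := by
    intro i
    rw [dotProduct, hrdef]
    push_cast
    refine Finset.sum_congr rfl fun k _ => ?_
    rw [Pi.star_apply, RCLike.star_def, ← Complex.normSq_eq_conj_mul_self]
  have hrpos : ∀ i, 0 < r i := by
    intro i
    have hex : ∃ k, w i k ≠ 0 := Function.ne_iff.mp (hw0 i)
    obtain ⟨k, hk⟩ := hex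
    refine Finset.sum_pos' (fun l _ => Complex.normSq_nonneg _) ⟨k, Finset.mem_univ k, ?_⟩
    exact Complex.normSq_pos.mpr hk
  have hsself : ∀ i, star (w i) ⬝ᵥ w i ≠ 0 := by
    intro i h
    rw [hreal i] at h
    exact (hrpos i).ne' (by exact_mod_cast h)
  have hunit : ∀ i, (starRingEnd ℂ) (d i) * d i = 1 := by
    intro i
    have h := hlam i i
    have := mul_right_cancel₀ (hsself i) (h.trans (one_mul _).symm)
    exact this
  have horth : ∀ i j, i ≠ j → star (w i) ⬝ᵥ w j = 0 := by
    intro i j hij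
    by_contra hne
    have h := mul_right_cancel₀ hne ((hlam i j).trans (one_mul _).symm)
    have hconj_ne : (starRingEnd ℂ) (d i) ≠ 0 := by
      intro h0
      rw [h0, zero_mul] at h
      exact one_ne_zero h.symm
    have : d j = d i := by
      have h2 : (starRingEnd ℂ) (d i) * d j = (starRingEnd ℂ) (d i) * d i := by
        rw [h, hunit i]
      exact mul_left_cancel₀ hconj_ne h2
    exact hij (hd_inj this.symm)
  set c : Fin n → ℝ := fun i => (Real.sqrt (r i))⁻¹ with hcdef
  set v : Fin n → Fin n → ℂ := fun i => (c i : ℂ) • w i with hvdef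
  have hcc : ∀ i, (c i : ℂ) * (c i : ℂ) * ((r i : ℝ) : ℂ) = 1 := by
    intro i
    have h1 : (c i) * (c i) * r i = 1 := by
      rw [hcdef]
      rw [← mul_inv, Real.mul_self_sqrt (hrpos i).le]
      exact inv_mul_cancel₀ (hrpos i).ne'
    calc (c i : ℂ) * (c i : ℂ) * ((r i : ℝ) : ℂ) = ((c i * c i * r i : ℝ) : ℂ) := by
          push_cast; ring
      _ = 1 := by rw [h1]; norm_num
  have hvv : ∀ i j, star (v i) ⬝ᵥ v j = if i = j then 1 else 0 := by
    intro i j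
    rw [hvdef]
    simp only [star_smul, smul_dotProduct, dotProduct_smul, smul_eq_mul]
    rcases eq_or_ne i j with rfl | hij
    · rw [if_pos rfl, hreal i, show star ((c i : ℝ) : ℂ) = ((c i : ℝ) : ℂ) from
        Complex.conj_ofReal _, ← mul_assoc]
      exact hcc i
    · rw [if_neg hij, horth i j hij]
      ring
  have hveig : ∀ i, U *ᵥ v i = d i • v i := by
    intro i
    rw [hvdef]
    simp only
    rw [Matrix.mulVec_smul, hw i, smul_comm]
  -- the unitary matrix of eigenvectors
  set gm : Matrix (Fin n) (Fin n) ℂ := Matrix.of fun k j => v j k with hgm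
  have hg1 : star gm * gm = 1 := by
    ext i j
    rw [Matrix.mul_apply, Matrix.one_apply]
    calc ∑ k, (star gm) i k * gm k j = ∑ k, star (v i k) * v j k := by
          refine Finset.sum_congr rfl fun k _ => ?_
          rw [Matrix.star_eq_conjTranspose, Matrix.conjTranspose_apply]
          rfl
      _ = star (v i) ⬝ᵥ v j := rfl
      _ = if i = j then 1 else 0 := hvv i j
  have hmem : gm ∈ Matrix.unitaryGroup (Fin n) ℂ := Matrix.mem_unitaryGroup_iff'.mpr hg1
  refine ⟨⟨gm, hmem⟩, d, hd_inj, hroots, ?_⟩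
  show U * gm = gm * Matrix.diagonal d
  ext i j
  rw [Matrix.mul_apply, Matrix.mul_diagonal]
  calc ∑ k, U i k * gm k j = (U *ᵥ v j) i := rfl
    _ = (d j • v j) i := by rw [hveig j]
    _ = gm i j * d j := by simp [hgm, mul_comm]

end AuxWeyl

/-- The maximal torus of diagonal matrices in the unitary group `U(n)`. -/
noncomputable def diagTorus (n : ℕ) : Subgroup (Matrix.unitaryGroup (Fin n) ℂ) where
  carrier := {u | ((u : Matrix (Fin n) (Fin n) ℂ)).IsDiag}
  one_mem' := by
    show ((1 : Matrix.unitaryGroup (Fin n) ℂ) : Matrix (Fin n) (Fin n) ℂ).IsDiag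
    rw [show ((1 : Matrix.unitaryGroup (Fin n) ℂ) : Matrix (Fin n) (Fin n) ℂ)
        = (1 : Matrix (Fin n) (Fin n) ℂ) from rfl]
    exact Matrix.isDiag_one
  mul_mem' := by
    intro a b ha hb
    intro i j hij
    rw [show ((a * b : Matrix.unitaryGroup (Fin n) ℂ) : Matrix (Fin n) (Fin n) ℂ)
        = (a : Matrix (Fin n) (Fin n) ℂ) * (b : Matrix (Fin n) (Fin n) ℂ) from rfl]
    rw [Matrix.mul_apply]
    refine Finset.sum_eq_zero fun k _ => ?_
    rcases eq_or_ne k i with rfl | hk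
    · rw [hb hij, mul_zero]
    · rw [ha (Ne.symm hk), zero_mul]
  inv_mem' := by
    intro a ha
    show ((a⁻¹ : Matrix.unitaryGroup (Fin n) ℂ) : Matrix (Fin n) (Fin n) ℂ).IsDiag
    rw [← Unitary.star_eq_inv, Unitary.coe_star, Matrix.star_eq_conjTranspose]
    exact Matrix.IsDiag.conjTranspose ha

/-- **Weyl's covering theorem for `U(n)`**: if `u ∈ U(n)` has pairwise distinct eigenvalues
(i.e. the roots of its characteristic polynomial have no repetition), then the fiber over `u`
of the map `(gT, t) ↦ g t g⁻¹` from `(U(n)/T) × T` to `U(n)` — which is independent of the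
chosen representative `g` of the coset `gT` — has exactly `n!` elements. -/
theorem weyl_covering_unitaryGroup (n : ℕ) (hn : 1 ≤ n)
    (u : Matrix.unitaryGroup (Fin n) ℂ)
    (hu : ((u : Matrix (Fin n) (Fin n) ℂ).charpoly.roots).Nodup) :
    Nat.card {p : (Matrix.unitaryGroup (Fin n) ℂ ⧸ diagTorus n) × diagTorus n |
      ∃ g : Matrix.unitaryGroup (Fin n) ℂ,
        (g : Matrix.unitaryGroup (Fin n) ℂ ⧸ diagTorus n) = p.1 ∧ g * p.2 * g⁻¹ = u} =
      n.factorial := by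
  
  classical
  obtain ⟨g₀, d, hd_inj, hroots, hcomm⟩ := aux_diagonalize u hu
  set P : Equiv.Perm (Fin n) → Matrix.unitaryGroup (Fin n) ℂ :=
    fun σ => ⟨Pm σ, Pm_mem σ⟩ with hPdef
  have hPcoe : ∀ σ, ((P σ : Matrix.unitaryGroup (Fin n) ℂ) : Matrix (Fin n) (Fin n) ℂ)
      = Pm σ := fun _ => rfl
  have hPinv : ∀ σ, (((P σ)⁻¹ : Matrix.unitaryGroup (Fin n) ℂ) : Matrix (Fin n) (Fin n) ℂ)
      = Pm σ⁻¹ := by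
    intro σ
    rw [Matrix.UnitaryGroup.inv_apply, hPcoe, Pm_star]
  set D : Matrix.unitaryGroup (Fin n) ℂ := g₀⁻¹ * u * g₀ with hDdef
  have hgDu : g₀ * D * g₀⁻¹ = u := by rw [hDdef]; group
  have hDcoe : ((D : Matrix.unitaryGroup (Fin n) ℂ) : Matrix (Fin n) (Fin n) ℂ)
      = Matrix.diagonal d := by
    rw [hDdef]
    rw [show ((g₀⁻¹ * u * g₀ : Matrix.unitaryGroup (Fin n) ℂ) : Matrix (Fin n) (Fin n) ℂ)
        = ((g₀⁻¹ : Matrix.unitaryGroup (Fin n) ℂ) : Matrix (Fin n) (Fin n) ℂ)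
          * (u : Matrix (Fin n) (Fin n) ℂ) * (g₀ : Matrix (Fin n) (Fin n) ℂ) from rfl]
    rw [Matrix.UnitaryGroup.inv_apply, Matrix.mul_assoc, hcomm, ← Matrix.mul_assoc,
      Matrix.UnitaryGroup.star_mul_self, Matrix.one_mul]
  have hTcoe : ∀ σ : Equiv.Perm (Fin n),
      (((P σ)⁻¹ * D * P σ : Matrix.unitaryGroup (Fin n) ℂ) : Matrix (Fin n) (Fin n) ℂ)
        = Matrix.diagonal (d ∘ ⇑σ⁻¹) := by
    intro σ
    rw [show (((P σ)⁻¹ * D * P σ : Matrix.unitaryGroup (Fin n) ℂ) : Matrix (Fin n) (Fin n) ℂ)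
        = (((P σ)⁻¹ : Matrix.unitaryGroup (Fin n) ℂ) : Matrix (Fin n) (Fin n) ℂ)
          * ((D : Matrix.unitaryGroup (Fin n) ℂ) : Matrix (Fin n) (Fin n) ℂ)
          * ((P σ : Matrix.unitaryGroup (Fin n) ℂ) : Matrix (Fin n) (Fin n) ℂ) from rfl]
    rw [hPinv, hPcoe, hDcoe]
    have h := Pm_conj_diag σ⁻¹ d
    rwa [inv_inv] at h
  -- the fiber map
  set S : Set ((Matrix.unitaryGroup (Fin n) ℂ ⧸ diagTorus n) × diagTorus n) :=
    {p | ∃ g : Matrix.unitaryGroup (Fin n) ℂ,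
      (g : Matrix.unitaryGroup (Fin n) ℂ ⧸ diagTorus n) = p.1 ∧ g * p.2 * g⁻¹ = u} with hSdef
  have htors_mem : ∀ σ : Equiv.Perm (Fin n), ((P σ)⁻¹ * D * P σ) ∈ diagTorus n := by
    intro σ
    show (((P σ)⁻¹ * D * P σ : Matrix.unitaryGroup (Fin n) ℂ)
        : Matrix (Fin n) (Fin n) ℂ).IsDiag
    rw [hTcoe]
    exact Matrix.isDiag_diagonal _
  set Φ : Equiv.Perm (Fin n) → ↥S := fun σ =>
    ⟨(((g₀ * P σ : Matrix.unitaryGroup (Fin n) ℂ) :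
        Matrix.unitaryGroup (Fin n) ℂ ⧸ diagTorus n),
      ⟨(P σ)⁻¹ * D * P σ, htors_mem σ⟩),
      ⟨g₀ * P σ, rfl, by
        show (g₀ * P σ) * ((P σ)⁻¹ * D * P σ) * (g₀ * P σ)⁻¹ = u
        have : (g₀ * P σ) * ((P σ)⁻¹ * D * P σ) * (g₀ * P σ)⁻¹ = g₀ * D * g₀⁻¹ := by group
        rw [this, hgDu]⟩⟩ with hΦdef
  have hinj : Function.Injective Φ := by
    intro σ τ h
    have h1 : ((g₀ * P σ : Matrix.unitaryGroup (Fin n) ℂ) :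
        Matrix.unitaryGroup (Fin n) ℂ ⧸ diagTorus n)
        = ((g₀ * P τ : Matrix.unitaryGroup (Fin n) ℂ) :
        Matrix.unitaryGroup (Fin n) ℂ ⧸ diagTorus n) :=
      congrArg (fun x : ↥S => x.1.1) h
    have hmem := QuotientGroup.eq.mp h1
    have hsimp : (g₀ * P σ)⁻¹ * (g₀ * P τ) = (P σ)⁻¹ * P τ := by group
    rw [hsimp] at hmem
    have hdiag : (((P σ)⁻¹ * P τ : Matrix.unitaryGroup (Fin n) ℂ)
        : Matrix (Fin n) (Fin n) ℂ).IsDiag := hmem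
    rw [show (((P σ)⁻¹ * P τ : Matrix.unitaryGroup (Fin n) ℂ) : Matrix (Fin n) (Fin n) ℂ)
        = (((P σ)⁻¹ : Matrix.unitaryGroup (Fin n) ℂ) : Matrix (Fin n) (Fin n) ℂ)
          * ((P τ : Matrix.unitaryGroup (Fin n) ℂ) : Matrix (Fin n) (Fin n) ℂ) from rfl,
      hPinv, hPcoe, ← Pm_mul] at hdiag
    have := Pm_eq_one_of_isDiag hdiag
    have := mul_inv_eq_one.mp this
    exact this.symm
  have hsurj : Function.Surjective Φ := by
    rintro ⟨⟨cq, t⟩, hp⟩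
    obtain ⟨g, hgc, hgu⟩ := hp
    have hgc' : (g : Matrix.unitaryGroup (Fin n) ℂ ⧸ diagTorus n) = cq := hgc
    set h : Matrix.unitaryGroup (Fin n) ℂ := g₀⁻¹ * g with hhdef
    set Hm : Matrix (Fin n) (Fin n) ℂ := (h : Matrix (Fin n) (Fin n) ℂ) with hHm
    set T' : Matrix (Fin n) (Fin n) ℂ
      := ((t : Matrix.unitaryGroup (Fin n) ℂ) : Matrix (Fin n) (Fin n) ℂ) with hT'
    have htdiag : T'.IsDiag := t.2
    have key2 : h * (t : Matrix.unitaryGroup (Fin n) ℂ) = D * h := by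
      rw [hhdef, hDdef, ← hgu]; group
    have key3 : (t : Matrix.unitaryGroup (Fin n) ℂ) = h⁻¹ * D * h := by
      rw [mul_assoc, ← key2]; group
    have hmat : Hm * T' = Matrix.diagonal d * Hm := by
      have := congrArg (fun x : Matrix.unitaryGroup (Fin n) ℂ
        => (x : Matrix (Fin n) (Fin n) ℂ)) key2
      simpa [hHm, hT', hDcoe] using this
    have hcp : T'.charpoly = (Matrix.diagonal d).charpoly := by
      have hTm : T' = star Hm * Matrix.diagonal d * Hm := by
        have := congrArg (fun x : Matrix.unitaryGroup (Fin n) ℂ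
          => (x : Matrix (Fin n) (Fin n) ℂ)) key3
        simpa [hHm, hT', hDcoe, Matrix.UnitaryGroup.inv_apply] using this
      rw [hTm]
      exact aux_charpoly_conj (Matrix.diagonal d) (star Hm) Hm
        (Matrix.UnitaryGroup.star_mul_self h) (Matrix.mem_unitaryGroup_iff.mp h.2)
    set tv : Fin n → ℂ := T'.diag with htv
    have hdiagT : Matrix.diagonal tv = T' := Matrix.IsDiag.diagonal_diag htdiag
    have hmaps : Finset.univ.val.map tv = Finset.univ.val.map d := by
      have e1 : (Matrix.diagonal tv).charpoly = (Matrix.diagonal d).charpoly := by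
        rw [hdiagT, hcp]
      have e2 := congrArg Polynomial.roots e1
      rwa [aux_roots_diag, aux_roots_diag] at e2
    have hnodup : (Finset.univ.val.map tv).Nodup := by
      rw [hmaps]; exact Finset.univ.nodup.map hd_inj
    have htv_inj : Function.Injective tv := by
      intro a b hab
      exact Multiset.inj_on_of_nodup_map hnodup a (Finset.mem_val.mpr (Finset.mem_univ a))
        b (Finset.mem_val.mpr (Finset.mem_univ b)) hab
    have hex : ∀ j, ∃ i, d i = tv j := by
      intro j
      have : tv j ∈ Finset.univ.val.map d := by
        rw [← hmaps]
        exact Multiset.mem_map_of_mem tv (Finset.mem_val.mpr (Finset.mem_univ j))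
      obtain ⟨i, _, hi⟩ := Multiset.mem_map.mp this
      exact ⟨i, hi⟩
    choose σ₀ hσ₀ using hex
    have hσ₀_inj : Function.Injective σ₀ := by
      intro a b hab
      apply htv_inj
      rw [← hσ₀ a, ← hσ₀ b, hab]
    set σe : Equiv.Perm (Fin n) :=
      Equiv.ofBijective σ₀ (Finite.injective_iff_bijective.mp hσ₀_inj) with hσe
    have hσe_app : ∀ j, σe j = σ₀ j := fun j => rfl
    have hmat2 : Hm * Matrix.diagonal tv = Matrix.diagonal d * Hm := by
      rw [hdiagT]; exact hmat
    have hsupp : ∀ i j, Hm i j ≠ 0 → i = σ₀ j := by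
      intro i j hne
      have := congrFun (congrFun hmat2 i) j
      rw [Matrix.mul_diagonal, Matrix.diagonal_mul] at this
      have htd : tv j = d i := by
        have h2 : tv j * Hm i j = d i * Hm i j := by
          rw [mul_comm (tv j) (Hm i j)]; exact this
        exact mul_right_cancel₀ hne h2
      exact hd_inj (by rw [hσ₀ j, htd])
    refine ⟨σe⁻¹, ?_⟩
    apply Subtype.ext
    apply Prod.ext
    · show ((g₀ * P σe⁻¹ : Matrix.unitaryGroup (Fin n) ℂ) :
          Matrix.unitaryGroup (Fin n) ℂ ⧸ diagTorus n) = cq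
      rw [← hgc']
      apply QuotientGroup.eq.mpr
      have hrw : (g₀ * P σe⁻¹)⁻¹ * g = (P σe⁻¹)⁻¹ * h := by rw [hhdef]; group
      rw [hrw]
      show (((P σe⁻¹)⁻¹ * h : Matrix.unitaryGroup (Fin n) ℂ)
          : Matrix (Fin n) (Fin n) ℂ).IsDiag
      rw [show (((P σe⁻¹)⁻¹ * h : Matrix.unitaryGroup (Fin n) ℂ)
            : Matrix (Fin n) (Fin n) ℂ)
          = (((P σe⁻¹)⁻¹ : Matrix.unitaryGroup (Fin n) ℂ) : Matrix (Fin n) (Fin n) ℂ)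
            * Hm from rfl, hPinv, inv_inv]
      rw [Pm, PEquiv.toMatrix_toPEquiv_mul]
      intro i j hij
      rw [Matrix.submatrix_apply, id_eq]
      by_contra hne
      exact hij (hσ₀_inj ((hsupp (σe i) j hne).symm.trans (hσe_app i).symm).symm)
    · show (⟨(P σe⁻¹)⁻¹ * D * P σe⁻¹, htors_mem σe⁻¹⟩ : ↥(diagTorus n)) = t
      apply Subtype.ext
      apply Subtype.ext
      show (((P σe⁻¹)⁻¹ * D * P σe⁻¹ : Matrix.unitaryGroup (Fin n) ℂ)
          : Matrix (Fin n) (Fin n) ℂ)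
        = ((t : Matrix.unitaryGroup (Fin n) ℂ) : Matrix (Fin n) (Fin n) ℂ)
      rw [hTcoe, ← hT', ← hdiagT, inv_inv]
      have hfun : d ∘ ⇑σe = tv := funext fun j => hσ₀ j
      rw [hfun]
  calc Nat.card ↥S = Nat.card (Equiv.Perm (Fin n)) :=
        Nat.card_congr (Equiv.ofBijective Φ ⟨hinj, hsurj⟩).symm
    _ = n.factorial := by
        rw [Nat.card_eq_fintype_card, Fintype.card_perm, Fintype.card_fin]
end
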